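/- arXiv:2205.05736 — 4 statements merged into one kernel-verified Lean document; each statement's English description precedes it below -/
import Mathlib

section
/- Let (T_{hk})_{h,k∈ℕ} be an infinite matrix with |T_{hk}| ≤ 1 for all h, k and whose entries depend only on h − k (Toeplitz structure: T_{hk} = T_{h'k'} whenever h − k = h' − k'). Fix h, k ∈ ℕ and let d ≥ max{h, k} + 1. Then | T_{hk} − (1/d) Σ_{x=0}^{d-1} T_{h⊕x, k⊕x} | ≤ 2|h − k| / d, where ⊕ denotes addition modulo d. In particular, for every fixed h, k, the average (1/d) Σ_{x=0}^{d-1} T_{h⊕x, k⊕x} converges to T_{hk} as d → ∞. -/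
open scoped Real
open Filter

/-- For an infinite Toeplitz matrix `T` with entries of modulus at most `1`
depending only on `h − k`, and fixed indices `h, k`, the cyclically averaged entry
`(1/d) Σ_{x<d} T_{h⊕x, k⊕x}` (with `⊕` addition mod `d`) differs from `T_{hk}` by at most
`2|h−k|/d` whenever `d ≥ max{h,k} + 1`; in particular it converges to `T_{hk}` as `d → ∞`. -/
theorem toeplitz_cyclic_average_bound
    (T : ℕ → ℕ → ℂ)
    (hToeplitz : ∀ h k h' k' : ℕ, (h : ℤ) - (k : ℤ) = (h' : ℤ) - (k' : ℤ) → T h k = T h' k')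
    (hBound : ∀ h k : ℕ, ‖T h k‖ ≤ 1)
    (h k : ℕ) :
    (∀ d : ℕ, max h k + 1 ≤ d →
      ‖T h k -
          (1 / (d : ℂ)) * ∑ x ∈ Finset.range d, T ((h + x) % d) ((k + x) % d)‖ ≤
        2 * |(h : ℝ) - (k : ℝ)| / (d : ℝ)) ∧
    Tendsto (fun d : ℕ =>
        (1 / (d : ℂ)) * ∑ x ∈ Finset.range d, T ((h + x) % d) ((k + x) % d))
      atTop (nhds (T h k)) := by
  set a := min h k with ha
  set b := max h k with hb
  have habs : |(h : ℝ) - (k : ℝ)| = ((b - a : ℕ) : ℝ) := by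
    rcases le_total h k with hle | hle
    · have hc : (h : ℝ) ≤ (k : ℝ) := by exact_mod_cast hle
      rw [abs_sub_comm, abs_of_nonneg (by linarith)]
      push_cast [ha, hb, min_eq_left hle, max_eq_right hle, Nat.cast_sub hle]
      ring
    · have hc : (k : ℝ) ≤ (h : ℝ) := by exact_mod_cast hle
      rw [abs_of_nonneg (by linarith)]
      push_cast [ha, hb, min_eq_right hle, max_eq_left hle, Nat.cast_sub hle]
      ring
  have main : ∀ d : ℕ, max h k + 1 ≤ d →
      ‖T h k -
          (1 / (d : ℂ)) * ∑ x ∈ Finset.range d, T ((h + x) % d) ((k + x) % d)‖ ≤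
        2 * |(h : ℝ) - (k : ℝ)| / (d : ℝ) := by
    intro d hd
    have hd0 : 0 < d := by omega
    have hdC : (d : ℂ) ≠ 0 := by exact_mod_cast hd0.ne'
    have hdR : (0 : ℝ) < (d : ℝ) := by exact_mod_cast hd0
    -- good x: equality of entries
    have hgood : ∀ x ∈ Finset.range d, x ∉ Finset.Ico (d - b) (d - a) →
        T ((h + x) % d) ((k + x) % d) = T h k := by
      intro x hx hxn
      rw [Finset.mem_range] at hx
      rw [Finset.mem_Ico] at hxn
      push_neg at hxn
      have hbd : b < d := by omega
      rcases lt_or_ge x (d - b) with hlt | hge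
      · have h1 : (h + x) % d = h + x := Nat.mod_eq_of_lt (by omega)
        have h2 : (k + x) % d = k + x := Nat.mod_eq_of_lt (by omega)
        rw [h1, h2]
        exact (hToeplitz h k (h + x) (k + x) (by push_cast; ring)).symm
      · have hxa : d - a ≤ x := hxn hge
        have h1 : (h + x) % d = h + x - d := by
          rw [Nat.mod_eq_sub_mod (by omega)]
          exact Nat.mod_eq_of_lt (by omega)
        have h2 : (k + x) % d = k + x - d := by
          rw [Nat.mod_eq_sub_mod (by omega)]
          exact Nat.mod_eq_of_lt (by omega)
        rw [h1, h2]
        refine (hToeplitz h k (h + x - d) (k + x - d) ?_).symm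
        have e1 : d ≤ h + x := by omega
        have e2 : d ≤ k + x := by omega
        omega
    have key : T h k -
          (1 / (d : ℂ)) * ∑ x ∈ Finset.range d, T ((h + x) % d) ((k + x) % d)
        = (1 / (d : ℂ)) * ∑ x ∈ Finset.range d,
            (T h k - T ((h + x) % d) ((k + x) % d)) := by
      rw [Finset.sum_sub_distrib, Finset.sum_const, Finset.card_range, nsmul_eq_mul,
        mul_sub]
      field_simp
    rw [key, norm_mul]
    have h1 : ‖(1 / (d : ℂ))‖ = 1 / (d : ℝ) := by
      simp
    rw [h1]
    have hsum : ‖∑ x ∈ Finset.range d,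
        (T h k - T ((h + x) % d) ((k + x) % d))‖ ≤ 2 * ((b - a : ℕ) : ℝ) := by
      calc ‖∑ x ∈ Finset.range d,
            (T h k - T ((h + x) % d) ((k + x) % d))‖
          ≤ ∑ x ∈ Finset.range d,
            ‖T h k - T ((h + x) % d) ((k + x) % d)‖ := by
            exact norm_sum_le _ _
        _ = ∑ x ∈ (Finset.range d).filter (· ∈ Finset.Ico (d - b) (d - a)),
            ‖T h k - T ((h + x) % d) ((k + x) % d)‖ := by
            rw [Finset.sum_filter_of_ne]
            intro x hx hne
            by_contra hc
            exact hne (by rw [hgood x hx hc, sub_self, norm_zero])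
        _ ≤ ∑ _x ∈ (Finset.range d).filter (· ∈ Finset.Ico (d - b) (d - a)), (2 : ℝ) := by
            refine Finset.sum_le_sum fun x _ => ?_
            calc ‖T h k - T ((h + x) % d) ((k + x) % d)‖
                ≤ ‖T h k‖ + ‖T ((h + x) % d) ((k + x) % d)‖ :=
                  norm_sub_le _ _
              _ ≤ 1 + 1 := add_le_add (hBound _ _) (hBound _ _)
              _ = 2 := by norm_num
        _ = 2 * (((Finset.range d).filter (· ∈ Finset.Ico (d - b) (d - a))).card : ℝ) := by
            rw [Finset.sum_const, nsmul_eq_mul]; ring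
        _ ≤ 2 * ((b - a : ℕ) : ℝ) := by
            have hcard : ((Finset.range d).filter (· ∈ Finset.Ico (d - b) (d - a))).card
                ≤ b - a := by
              calc ((Finset.range d).filter (· ∈ Finset.Ico (d - b) (d - a))).card
                  ≤ (Finset.Ico (d - b) (d - a)).card := by
                    apply Finset.card_le_card
                    intro x hx
                    simp only [Finset.mem_filter] at hx
                    exact hx.2
                _ = (d - a) - (d - b) := Nat.card_Ico _ _
                _ ≤ b - a := by omega
            have := Nat.cast_le (α := ℝ) |>.mpr hcard
            linarith
    rw [habs]
    calc (1 / (d : ℝ)) * ‖∑ x ∈ Finset.range d,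
        (T h k - T ((h + x) % d) ((k + x) % d))‖
        ≤ (1 / (d : ℝ)) * (2 * ((b - a : ℕ) : ℝ)) := by
          apply mul_le_mul_of_nonneg_left hsum
          positivity
      _ = 2 * ((b - a : ℕ) : ℝ) / (d : ℝ) := by ring
  refine ⟨main, ?_⟩
  rw [tendsto_iff_dist_tendsto_zero]
  apply squeeze_zero' (f := fun d : ℕ => dist
    ((1 / (d : ℂ)) * ∑ x ∈ Finset.range d, T ((h + x) % d) ((k + x) % d)) (T h k))
    (g := fun d : ℕ => 2 * |(h : ℝ) - (k : ℝ)| / (d : ℝ))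
  · exact Filter.Eventually.of_forall fun d => dist_nonneg
  · filter_upwards [Filter.eventually_ge_atTop (max h k + 1)] with d hd
    have := main d hd
    rw [Complex.dist_eq]
    rwa [norm_sub_rev]
  · exact tendsto_const_div_atTop_nhds_zero_nat _
end

section
/- Let m ∈ ℕ₊ and let (T_{𝐡,𝐤})_{𝐡,𝐤∈ℕᵐ} be an infinite multi-index matrix with |T_{𝐡,𝐤}| ≤ 1 for all multi-indices 𝐡, 𝐤 ∈ ℕᵐ, whose entries depend only on 𝐡 − 𝐤 (multi-index Toeplitz structure). Fix 𝐡, 𝐤 ∈ ℕᵐ and 𝐝 = (d₁, …, d_m) with d_j ≥ max{h_j, k_j} + 1 for each j, and set D(𝐝) = ∏_{j=1}^m d_j. Then | T_{𝐡,𝐤} − (1/D(𝐝)) Σ_{x₁=0}^{d₁−1} ⋯ Σ_{x_m=0}^{d_m−1} T_{𝐡⊕𝐱, 𝐤⊕𝐱} | ≤ 2 ( D(𝐝) − ∏_{j=1}^m (d_j − |h_j − k_j|) ) / D(𝐝), where 𝐡 ⊕ 𝐱 denotes componentwise addition with the j-th component taken modulo d_j. In particular the left-hand side tends to 0 as min_j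 d_j → ∞. -/
open scoped Real
open Filter

open Finset in
private lemma cast_abs_sub' (a b : ℕ) : |(a : ℝ) - b| = ((max a b - min a b : ℕ) : ℝ) := by
  rw [Nat.cast_sub (min_le_max), Nat.cast_max, Nat.cast_min, max_sub_min_eq_abs, abs_sub_comm]

open Finset in
private lemma mod_diff_eq' (a b x d : ℕ) (ha : a < d) (hb : b < d) (hx : x < d)
    (hgood : x < d - max a b ∨ d - min a b ≤ x) :
    (((a + x) % d : ℕ) : ℤ) - (((b + x) % d : ℕ) : ℤ) = (a : ℤ) - b := by
  rcases hgood with hg | hg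
  · rw [Nat.mod_eq_of_lt (by omega), Nat.mod_eq_of_lt (by omega)]
    push_cast; ring
  · have h1 : (a + x) % d = a + x - d := by
      rw [Nat.mod_eq_sub_mod (by omega), Nat.mod_eq_of_lt (by omega)]
    have h2 : (b + x) % d = b + x - d := by
      rw [Nat.mod_eq_sub_mod (by omega), Nat.mod_eq_of_lt (by omega)]
    rw [h1, h2]
    omega

open Finset in
private lemma count_good' (a b d : ℕ) (hd : max a b + 1 ≤ d) :
    d - (max a b - min a b) ≤
      (univ.filter (fun x : Fin d =>
        (((a + (x : ℕ)) % d : ℕ) : ℤ) - (((b + (x : ℕ)) % d : ℕ) : ℤ) = (a : ℤ) - b)).card := by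
  have hsub : (univ.filter (fun x : Fin d => (x : ℕ) < d - max a b ∨ d - min a b ≤ (x : ℕ)))
      ⊆ (univ.filter (fun x : Fin d =>
        (((a + (x : ℕ)) % d : ℕ) : ℤ) - (((b + (x : ℕ)) % d : ℕ) : ℤ) = (a : ℤ) - b)) := by
    intro x hx
    simp only [mem_filter, mem_univ, true_and] at hx ⊢
    exact mod_diff_eq' a b x d (by omega) (by omega) x.isLt hx
  refine le_trans ?_ (Finset.card_le_card hsub)
  have hc : (univ.filter (fun x : Fin d => (x : ℕ) < d - max a b ∨ d - min a b ≤ (x : ℕ))).card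
      = ((range d).filter (fun x : ℕ => x < d - max a b ∨ d - min a b ≤ x)).card := by
    rw [Finset.card_filter, Finset.card_filter]
    exact Fin.sum_univ_eq_sum_range
      (fun x => if x < d - max a b ∨ d - min a b ≤ x then (1:ℕ) else 0) d
  rw [hc]
  have heq : (range d).filter (fun x : ℕ => x < d - max a b ∨ d - min a b ≤ x)
      = range (d - max a b) ∪ Ico (d - min a b) d := by
    ext x
    simp only [mem_filter, mem_range, mem_union, mem_Ico]
    omega
  rw [heq, Finset.card_union_of_disjoint, Finset.card_range, Nat.card_Ico]
  · omega
  · simp only [Finset.disjoint_left, mem_range, mem_Ico]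
    omega

open Finset in
private lemma multiindex_main_bound (m : ℕ)
    (T : (Fin m → ℕ) → (Fin m → ℕ) → ℂ)
    (hToeplitz : ∀ h k h' k' : Fin m → ℕ,
      (∀ j, (h j : ℤ) - (k j : ℤ) = (h' j : ℤ) - (k' j : ℤ)) → T h k = T h' k')
    (hBound : ∀ h k : Fin m → ℕ, ‖T h k‖ ≤ 1)
    (h k : Fin m → ℕ) (d : Fin m → ℕ) (hd : ∀ j, max (h j) (k j) + 1 ≤ d j) :
    ‖T h k -
        (1 / ((∏ j, d j : ℕ) : ℂ)) * ∑ x : (j : Fin m) → Fin (d j),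
          T (fun j => (h j + (x j : ℕ)) % d j) (fun j => (k j + (x j : ℕ)) % d j)‖ ≤
      2 * (((∏ j, d j : ℕ) : ℝ) - ∏ j, ((d j : ℝ) - |(h j : ℝ) - (k j : ℝ)|)) /
        ((∏ j, d j : ℕ) : ℝ) := by
  classical
  set D : ℕ := ∏ j, d j with hDdef
  have hDpos : 0 < D := Finset.prod_pos fun j _ => by have := hd j; omega
  have hDC : ((D : ℕ) : ℂ) ≠ 0 := Nat.cast_ne_zero.mpr hDpos.ne'
  set T' : ((j : Fin m) → Fin (d j)) → ℂ := fun x =>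
    T (fun j => (h j + (x j : ℕ)) % d j) (fun j => (k j + (x j : ℕ)) % d j) with hT'
  set G : (j : Fin m) → Finset (Fin (d j)) := fun j => univ.filter (fun x : Fin (d j) =>
    (((h j + (x : ℕ)) % d j : ℕ) : ℤ) - (((k j + (x : ℕ)) % d j : ℕ) : ℤ)
      = (h j : ℤ) - k j) with hG
  set S : Finset ((j : Fin m) → Fin (d j)) := Fintype.piFinset G with hS
  have hcardPi : Fintype.card ((j : Fin m) → Fin (d j)) = D := by
    simp [Fintype.card_pi, hDdef]
  have hSle : S.card ≤ D := hcardPi ▸ Finset.card_le_univ S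
  have hgood : ∀ x ∈ S, T' x = T h k := by
    intro x hx
    rw [Fintype.mem_piFinset] at hx
    refine (hToeplitz h k _ _ fun j => ?_).symm
    have := hx j
    simp only [hG, mem_filter, mem_univ, true_and] at this
    exact this.symm
  have hGcard : ∀ j, d j - (max (h j) (k j) - min (h j) (k j)) ≤ (G j).card :=
    fun j => count_good' (h j) (k j) (d j) (hd j)
  have hScard : ∏ j, (d j - (max (h j) (k j) - min (h j) (k j))) ≤ S.card := by
    rw [hS, Fintype.card_piFinset]
    exact Finset.prod_le_prod' fun j _ => hGcard j
  have hrw : T h k - (1 / ((D : ℕ) : ℂ)) * ∑ x, T' x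
      = (1 / ((D : ℕ) : ℂ)) * ∑ x, (T h k - T' x) := by
    rw [Finset.sum_sub_distrib, Finset.sum_const, Finset.card_univ, hcardPi]
    field_simp
    ring
  rw [hrw, norm_mul]
  have habs1 : ‖1 / ((D : ℕ) : ℂ)‖ = 1 / (D : ℝ) := by
    simp [map_div₀]
  rw [habs1]
  have hsum : ‖∑ x, (T h k - T' x)‖ ≤ 2 * ((D : ℝ) - S.card) := by
    refine le_trans (norm_sum_le _ _) ?_
    have hle : ∀ x : (j : Fin m) → Fin (d j), ‖T h k - T' x‖
        ≤ if x ∈ S then 0 else 2 := by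
      intro x
      by_cases hx : x ∈ S
      · simp [hx, hgood x hx]
      · simp only [hx, if_false]
        refine le_trans (norm_sub_le _ _) ?_
        have := hBound h k
        have := hBound (fun j => (h j + (x j : ℕ)) % d j) (fun j => (k j + (x j : ℕ)) % d j)
        simp only [hT']
        linarith
    refine le_trans (Finset.sum_le_sum fun x _ => hle x) ?_
    rw [Finset.sum_ite, Finset.sum_const, Finset.sum_const]
    have h1 : univ.filter (fun x => x ∈ S) = S := Finset.filter_univ_mem S
    have h2 : (univ.filter (fun x => ¬ x ∈ S)).card = D - S.card := by
      rw [Finset.filter_not, Finset.card_sdiff_of_subset (Finset.filter_subset _ _), h1,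
        Finset.card_univ, hcardPi]
    rw [h2]
    simp only [smul_zero, zero_add, nsmul_eq_mul]
    rw [Nat.cast_sub hSle]
    linarith
  calc 1 / (D : ℝ) * ‖∑ x, (T h k - T' x)‖
      ≤ 1 / (D : ℝ) * (2 * ((D : ℝ) - S.card)) := by
        refine mul_le_mul_of_nonneg_left hsum (by positivity)
    _ ≤ 2 * ((D : ℝ) - ∏ j, ((d j : ℝ) - |(h j : ℝ) - (k j : ℝ)|)) / (D : ℝ) := by
        have hprod : ∏ j, ((d j : ℝ) - |(h j : ℝ) - (k j : ℝ)|)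
            = ((∏ j, (d j - (max (h j) (k j) - min (h j) (k j))) : ℕ) : ℝ) := by
          rw [Nat.cast_prod]
          refine Finset.prod_congr rfl fun j _ => ?_
          rw [cast_abs_sub']
          exact (Nat.cast_sub (by have := hd j; omega)).symm
        rw [hprod]
        have hcast : ((∏ j, (d j - (max (h j) (k j) - min (h j) (k j))) : ℕ) : ℝ) ≤ (S.card : ℝ) :=
          Nat.cast_le.mpr hScard
        have hnn : (0:ℝ) ≤ 1 / (D : ℝ) := by positivity
        have key : 2 * ((D : ℝ) - S.card)
            ≤ 2 * ((D : ℝ) - ((∏ j, (d j - (max (h j) (k j) - min (h j) (k j))) : ℕ) : ℝ)) := by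
          linarith
        calc 1 / (D : ℝ) * (2 * ((D : ℝ) - S.card))
            ≤ 1 / (D : ℝ) *
              (2 * ((D : ℝ) - ((∏ j, (d j - (max (h j) (k j) - min (h j) (k j))) : ℕ) : ℝ))) :=
              mul_le_mul_of_nonneg_left key hnn
          _ = 2 * ((D : ℝ) - ((∏ j, (d j - (max (h j) (k j) - min (h j) (k j))) : ℕ) : ℝ)) /
              (D : ℝ) := by ring

open Finset in
private lemma multiindex_rhs_tendsto (m : ℕ) (h k : Fin m → ℕ) :
    Tendsto (fun d : Fin m → ℕ =>
      2 * (((∏ j, d j : ℕ) : ℝ) - ∏ j, ((d j : ℝ) - |(h j : ℝ) - (k j : ℝ)|)) /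
        ((∏ j, d j : ℕ) : ℝ)) atTop (nhds 0) := by
  set c : Fin m → ℝ := fun j => |(h j : ℝ) - (k j : ℝ)| with hc
  have hq : ∀ j : Fin m, Tendsto (fun d : Fin m → ℕ => ((d j : ℝ) - c j) / (d j))
      atTop (nhds 1) := by
    intro j
    have heval : Tendsto (fun d : Fin m → ℕ => d j) atTop atTop :=
      tendsto_atTop_atTop.mpr fun b => ⟨fun _ => b, fun a ha => ha j⟩
    have hdj : Tendsto (fun d : Fin m → ℕ => ((d j : ℕ) : ℝ)) atTop atTop :=
      tendsto_natCast_atTop_atTop.comp heval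
    have h1 : Tendsto (fun x : ℝ => 1 - c j / x) atTop (nhds 1) := by
      have := (tendsto_const_nhds (α := ℝ) (x := c j)).div_atTop (tendsto_id (α := ℝ))
      simpa using tendsto_const_nhds.sub this
    have h2 : (fun x : ℝ => 1 - c j / x) =ᶠ[atTop] fun x : ℝ => (x - c j) / x := by
      filter_upwards [eventually_ge_atTop (1 : ℝ)] with x hx
      have : x ≠ 0 := by linarith
      field_simp
    exact (h1.congr' h2).comp hdj
  have hprod : Tendsto (fun d : Fin m → ℕ => ∏ j, ((d j : ℝ) - c j) / (d j))
      atTop (nhds 1) := by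
    have := tendsto_finset_prod (f := fun j (d : Fin m → ℕ) => ((d j : ℝ) - c j) / (d j))
      (x := atTop) (a := fun _ => 1) univ (fun j _ => hq j)
    simpa using this
  have hmain : Tendsto (fun d : Fin m → ℕ => 2 * (1 - ∏ j, ((d j : ℝ) - c j) / (d j)))
      atTop (nhds 0) := by
    have h1 := hprod.const_sub (1 : ℝ)
    have h2 := h1.const_mul (2 : ℝ)
    simpa using h2
  refine hmain.congr' ?_
  filter_upwards [eventually_ge_atTop (fun _ => 1 : Fin m → ℕ)] with d hd
  have hdj : ∀ j, 1 ≤ d j := fun j => hd j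
  have hDpos : 0 < (∏ j, d j : ℕ) := Finset.prod_pos fun j _ => hdj j
  have hDR : (0:ℝ) < ((∏ j, d j : ℕ) : ℝ) := by exact_mod_cast hDpos
  rw [Finset.prod_div_distrib, Nat.cast_prod]
  have hne : (∏ j, ((d j : ℕ) : ℝ)) ≠ 0 := by
    refine Finset.prod_ne_zero_iff.mpr fun j _ => ?_
    have : d j ≠ 0 := by have := hdj j; omega
    exact_mod_cast this
  field_simp
  simp only [hc]

/-- multi-index version of the cyclic averaging bound. For an infinite
multi-index Toeplitz matrix `T` on `ℕᵐ` with entries of modulus at most `1` depending only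
on `𝐡 − 𝐤`, and fixed multi-indices `𝐡, 𝐤`, the cyclically averaged entry over
`𝐱 ∈ ∏_j {0,…,d_j−1}` differs from `T_{𝐡,𝐤}` by at most
`2(D(𝐝) − ∏_j (d_j − |h_j − k_j|))/D(𝐝)` whenever `d_j ≥ max{h_j,k_j} + 1` for all `j`;
in particular the difference tends to `0` as `min_j d_j → ∞`. -/
theorem multiindex_toeplitz_cyclic_average_bound
    (m : ℕ) (hm : 0 < m)
    (T : (Fin m → ℕ) → (Fin m → ℕ) → ℂ)
    (hToeplitz : ∀ h k h' k' : Fin m → ℕ,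
      (∀ j, (h j : ℤ) - (k j : ℤ) = (h' j : ℤ) - (k' j : ℤ)) → T h k = T h' k')
    (hBound : ∀ h k : Fin m → ℕ, ‖T h k‖ ≤ 1)
    (h k : Fin m → ℕ) :
    (∀ d : Fin m → ℕ, (∀ j, max (h j) (k j) + 1 ≤ d j) →
      ‖T h k -
          (1 / ((∏ j, d j : ℕ) : ℂ)) * ∑ x : (j : Fin m) → Fin (d j),
            T (fun j => (h j + (x j : ℕ)) % d j) (fun j => (k j + (x j : ℕ)) % d j)‖ ≤
        2 * (((∏ j, d j : ℕ) : ℝ) - ∏ j, ((d j : ℝ) - |(h j : ℝ) - (k j : ℝ)|)) /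
          ((∏ j, d j : ℕ) : ℝ)) ∧
    Tendsto (fun d : Fin m → ℕ =>
        ‖T h k -
          (1 / ((∏ j, d j : ℕ) : ℂ)) * ∑ x : (j : Fin m) → Fin (d j),
            T (fun j => (h j + (x j : ℕ)) % d j) (fun j => (k j + (x j : ℕ)) % d j)‖)
      atTop (nhds 0) := by
  refine ⟨fun d hd => multiindex_main_bound m T hToeplitz hBound h k d hd, ?_⟩
  refine tendsto_of_tendsto_of_tendsto_of_le_of_le' tendsto_const_nhds
    (multiindex_rhs_tendsto m h k) (Eventually.of_forall fun d => norm_nonneg _) ?_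
  filter_upwards [eventually_ge_atTop (fun j => max (h j) (k j) + 1 : Fin m → ℕ)] with d hd
  exact multiindex_main_bound m T hToeplitz hBound h k d fun j => hd j
end

section
/- Let κ > 0 and let p_κ(φ) = (1/2π) sinh(√κ)/(cosh(√κ) − cos φ) be the wrapped Cauchy density on [-π, π]. Then ∫_{-π}^{π} p_κ(φ) log₂(2π p_κ(φ)) dφ = −log₂(1 − e^{-2√κ}). Equivalently, the differential entropy of p_κ equals h(p_κ) = log₂( 2π (1 − e^{-2√κ}) ), and the Kullback–Leibler divergence from the uniform density u ≡ 1/(2π) satisfies D(p_κ‖u) = log₂( 1/(1 − e^{-2√κ}) ). -/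
open scoped Real
open MeasureTheory

lemma intcos_int (k : ℤ) (hk : k ≠ 0) : ∫ x in (-π)..π, Real.cos (k * x) = 0 := by
  have hc : (k:ℝ) ≠ 0 := Int.cast_ne_zero.mpr hk
  rw [intervalIntegral.integral_comp_mul_left (fun x => Real.cos x) hc]
  have h1 : Real.sin ((k:ℝ) * π) = 0 := Real.sin_int_mul_pi k
  simp [integral_cos, mul_comm π, h1]

lemma intcos_zero : ∫ x in (-π)..π, Real.cos ((0:ℝ) * x) = 2 * π := by
  simp [two_mul]

lemma intcos_nat (n : ℕ) (hn : n ≠ 0) : ∫ x in (-π)..π, Real.cos (n * x) = 0 := by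
  simpa using intcos_int n (Int.natCast_ne_zero.mpr hn)

lemma intcoscos (n m : ℕ) (hm : m ≠ 0) :
    ∫ x in (-π)..π, Real.cos (n * x) * Real.cos (m * x) = if n = m then π else 0 := by
  have h : ∀ x : ℝ, Real.cos (n * x) * Real.cos (m * x)
      = (Real.cos (((n - m : ℤ):ℝ) * x) + Real.cos (((n + m : ℤ):ℝ) * x)) / 2 := by
    intro x
    push_cast
    rw [sub_mul, add_mul, Real.cos_sub, Real.cos_add]
    ring
  rw [intervalIntegral.integral_congr (fun x _ => h x)]
  have hi : ∀ c : ℤ, IntervalIntegrable (fun x => Real.cos ((c:ℝ) * x)) volume (-π) π :=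
    fun c => (Real.continuous_cos.comp (continuous_const.mul continuous_id)).intervalIntegrable _ _
  simp only [div_eq_mul_inv]
  rw [intervalIntegral.integral_mul_const, intervalIntegral.integral_add (hi _) (hi _)]
  rcases eq_or_ne n m with rfl | hnm
  · rw [intcos_int ((n:ℤ)+n) (by positivity)]
    simp only [sub_self, Int.cast_zero, intcos_zero]
    simp
    ring
  · rw [intcos_int ((n:ℤ)-m) (sub_ne_zero.mpr (by exact_mod_cast hnm)),
      intcos_int ((n:ℤ)+m) (by positivity)]
    simp [hnm]


lemma Dpos {r : ℝ} (hr0 : 0 < r) (hr1 : r < 1) (x : ℝ) :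
    0 < 1 - 2*r*Real.cos x + r^2 := by
  nlinarith [Real.cos_le_one x, sq_nonneg (1 - r)]

lemma normz {r : ℝ} (hr0 : 0 ≤ r) (x : ℝ) : ‖(r:ℂ) * Complex.exp (x * Complex.I)‖ = r := by
  rw [norm_mul, Complex.norm_exp_ofReal_mul_I, Complex.norm_real]
  simp [_root_.abs_of_nonneg hr0]

lemma normSq_one_sub (r x : ℝ) :
    Complex.normSq (1 - (r:ℂ) * Complex.exp (x * Complex.I)) = 1 - 2*r*Real.cos x + r^2 := by
  have h1 : (1 - (r:ℂ) * Complex.exp (x * Complex.I)).re = 1 - r * Real.cos x := by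
    simp [Complex.exp_ofReal_mul_I_re]
  have h2 : (1 - (r:ℂ) * Complex.exp (x * Complex.I)).im = -(r * Real.sin x) := by
    simp [Complex.exp_ofReal_mul_I_im]
  rw [Complex.normSq_apply, h1, h2]
  nlinarith [Real.sin_sq_add_cos_sq x]

lemma zpow_re (r x : ℝ) (n : ℕ) :
    (((r:ℂ) * Complex.exp (x * Complex.I)) ^ n).re = r^n * Real.cos (n * x) := by
  rw [mul_pow, ← Complex.exp_nat_mul, ← Complex.ofReal_pow]
  have : (n:ℂ) * ((x:ℝ) * Complex.I) = ((n * x : ℝ):ℂ) * Complex.I := by push_cast; ring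
  rw [this, Complex.re_ofReal_mul, Complex.exp_ofReal_mul_I_re]

lemma hasSum_logD {r : ℝ} (hr0 : 0 < r) (hr1 : r < 1) (x : ℝ) :
    HasSum (fun n : ℕ => -2 * (r^n * Real.cos (n * x)) / n)
      (Real.log (1 - 2*r*Real.cos x + r^2)) := by
  set z := (r:ℂ) * Complex.exp (x * Complex.I) with hz
  have hn : ‖z‖ < 1 := by rw [normz hr0.le]; exact hr1
  have h := Complex.hasSum_re (Complex.hasSum_taylorSeries_neg_log hn)
  have hre : ∀ n : ℕ, (z ^ n / (n:ℂ)).re = r^n * Real.cos (n*x) / n := by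
    intro n
    rw [show ((n:ℂ)) = ((n:ℝ):ℂ) by push_cast; rfl, Complex.div_ofReal_re, zpow_re]
  have h2 : HasSum (fun n : ℕ => r^n * Real.cos (n*x) / n)
      (-Real.log (‖1 - z‖)) := by
    simpa [hre, Complex.log_re] using h
  have h3 := h2.mul_left (-2)
  have hlog : Real.log (1 - 2*r*Real.cos x + r^2) = 2 * Real.log (‖1 - z‖) := by
    rw [← normSq_one_sub r x, ← Complex.sq_norm, Real.log_pow]
    norm_num
    rfl
  rw [hlog, show (2:ℝ) * Real.log (‖1-z‖) = -2 * -Real.log (‖1-z‖) by ring]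
  have e : (fun n : ℕ => -2 * (r^n * Real.cos (n * x)) / n)
      = fun i : ℕ => -2 * (r ^ i * Real.cos (i * x) / i) := by
    funext n
    ring
  rw [e]; exact h3

lemma hasSum_inv {r : ℝ} (hr0 : 0 < r) (hr1 : r < 1) (x : ℝ) :
    HasSum (fun n : ℕ => r^n * Real.cos (n * x))
      ((1 - r*Real.cos x) / (1 - 2*r*Real.cos x + r^2)) := by
  set z := (r:ℂ) * Complex.exp (x * Complex.I) with hz
  have hn : ‖z‖ < 1 := by rw [normz hr0.le]; exact hr1
  have h := Complex.hasSum_re (hasSum_geometric_of_norm_lt_one hn)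
  have hre : ∀ n : ℕ, (z ^ n).re = r^n * Real.cos (n*x) := fun n => zpow_re r x n
  have hinv : ((1 - z)⁻¹).re = (1 - r*Real.cos x) / (1 - 2*r*Real.cos x + r^2) := by
    rw [Complex.inv_re, normSq_one_sub r x]
    congr 1
    simp [hz, Complex.re_ofReal_mul, Complex.exp_ofReal_mul_I_re]
  simpa [hre, hinv] using h

lemma swap_sum_integral (F : ℕ → ℝ → ℝ) (g : ℝ → ℝ)
    (hF : ∀ x, HasSum (fun n => F n x) (g x))
    (hc : ∀ n, Continuous (F n)) (C : ℕ → ℝ)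
    (hC : ∀ n x, |F n x| ≤ C n) (hCs : Summable C) :
    HasSum (fun n => ∫ x in (-π)..π, F n x) (∫ x in (-π)..π, g x) := by
  have hle : -π ≤ π := by linarith [Real.pi_pos]
  set μ := volume.restrict (Set.Ioc (-π) π) with hμ
  have hint : ∀ n, Integrable (F n) μ := fun n => (hc n).integrableOn_Ioc
  have hCnn : ∀ n, 0 ≤ C n := fun n => le_trans (abs_nonneg _) (hC n 0)
  have hnorm : ∀ n, ∫ a, ‖F n a‖ ∂μ ≤ C n * (2*π) := by
    intro n
    have h1 : ∫ a, ‖F n a‖ ∂μ ≤ ∫ _a, C n ∂μ :=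
      integral_mono (hint n).norm (integrable_const _) (fun a => by
        simpa [Real.norm_eq_abs] using hC n a)
    rw [integral_const] at h1
    refine h1.trans_eq ?_
    rw [hμ, measureReal_def, Measure.restrict_apply_univ, Real.volume_Ioc, smul_eq_mul]
    rw [ENNReal.toReal_ofReal (by linarith [Real.pi_pos])]
    ring
  have hsum : Summable fun n => ∫ a, ‖F n a‖ ∂μ :=
    Summable.of_nonneg_of_le (fun n => integral_nonneg (fun a => norm_nonneg _))
      hnorm (hCs.mul_right _)
  have key := MeasureTheory.hasSum_integral_of_summable_integral_norm hint hsum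
  have heq : (∫ a, (∑' i, F i a) ∂μ) = ∫ a, g a ∂μ :=
    integral_congr_ae (Filter.Eventually.of_forall fun x => (hF x).tsum_eq)
  rw [heq] at key
  simpa [intervalIntegral.integral_of_le hle] using key

section
variable {r : ℝ}

lemma bound_aux (hr0 : 0 < r) (hr1 : r < 1) (n : ℕ) (x : ℝ) :
    |(-2 * (r^n * Real.cos (n * x)) / n)| ≤ 2 * r^n := by
  rcases Nat.eq_zero_or_pos n with rfl | hn
  · simp
  · rw [abs_div, abs_mul, abs_mul]
    have h1 : |Real.cos (n*x)| ≤ 1 := Real.abs_cos_le_one _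
    have h2 : (1:ℝ) ≤ |(n:ℝ)| := by
      rw [abs_of_nonneg (by positivity)]
      exact_mod_cast hn
    have h3 : |r ^ n| = r^n := abs_of_pos (pow_pos hr0 n)
    have hnum : |(-2:ℝ)| * (|r^n| * |Real.cos (n*x)|) ≤ 2 * r^n := by
      rw [h3]
      calc |(-2:ℝ)| * (r^n * |Real.cos (n*x)|) = 2 * (r^n * |Real.cos (n*x)|) := by
            norm_num
        _ ≤ 2 * (r^n * 1) := by
            gcongr
            all_goals exact Real.abs_cos_le_one _
        _ = 2 * r^n := by ring
    calc |(-2:ℝ)| * (|r^n| * |Real.cos (n*x)|) / |(n:ℝ)|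
        ≤ |(-2:ℝ)| * (|r^n| * |Real.cos (n*x)|) / 1 := by
          apply div_le_div_of_nonneg_left _ one_pos h2 <;> positivity
      _ ≤ 2 * r^n := by rw [div_one]; exact hnum

lemma sum_geom (hr0 : 0 < r) (hr1 : r < 1) : Summable (fun n : ℕ => 2 * r^n) :=
  (summable_geometric_of_lt_one hr0.le hr1).mul_left 2

lemma L1 (hr0 : 0 < r) (hr1 : r < 1) :
    ∫ x in (-π)..π, Real.log (1 - 2*r*Real.cos x + r^2) = 0 := by
  have h := swap_sum_integral (fun n x => -2 * (r^n * Real.cos (n * x)) / n)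
    (fun x => Real.log (1 - 2*r*Real.cos x + r^2)) (hasSum_logD hr0 hr1)
    (fun n => by fun_prop) (fun n => 2 * r^n) (bound_aux hr0 hr1) (sum_geom hr0 hr1)
  have hz : ∀ n : ℕ, (∫ x in (-π)..π, -2 * (r^n * Real.cos (n * x)) / n) = 0 := by
    intro n
    rcases Nat.eq_zero_or_pos n with rfl | hn
    · simp
    · have : (fun x => -2 * (r^n * Real.cos (n * x)) / n)
          = fun x => (-2 * r^n / n) * Real.cos (n * x) := by funext x; ring
      rw [this, intervalIntegral.integral_const_mul, intcos_nat n hn.ne']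
      all_goals simp
  simp only [hz] at h
  exact (hasSum_zero.unique h).symm

lemma L2 (hr0 : 0 < r) (hr1 : r < 1) (m : ℕ) (hm : m ≠ 0) :
    ∫ x in (-π)..π, Real.log (1 - 2*r*Real.cos x + r^2) * Real.cos (m * x)
      = -2 * π * r^m / m := by
  have hF : ∀ x, HasSum (fun n : ℕ => (-2 * (r^n * Real.cos (n * x)) / n) * Real.cos (m*x))
      (Real.log (1 - 2*r*Real.cos x + r^2) * Real.cos (m*x)) :=
    fun x => (hasSum_logD hr0 hr1 x).mul_right _
  have h := swap_sum_integral _ _ hF (fun n => by fun_prop) (fun n => 2 * r^n)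
    (fun n x => by
      calc |(-2 * (r^n * Real.cos (n * x)) / n) * Real.cos (m*x)|
          ≤ |(-2 * (r^n * Real.cos (n * x)) / n)| * 1 := by
            rw [abs_mul]
            exact mul_le_mul_of_nonneg_left (Real.abs_cos_le_one _) (abs_nonneg _)
        _ ≤ 2 * r^n := by rw [mul_one]; exact bound_aux hr0 hr1 n x)
    (sum_geom hr0 hr1)
  have hz : ∀ n : ℕ, (∫ x in (-π)..π, (-2 * (r^n * Real.cos (n * x)) / n) * Real.cos (m*x))
      = if n = m then -2 * π * r^m / m else 0 := by
    intro n
    have : (fun x => (-2 * (r^n * Real.cos (n * x)) / n) * Real.cos (m*x))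
        = fun x => (-2 * r^n / n) * (Real.cos (n * x) * Real.cos (m * x)) := by
      funext x; ring
    rw [this, intervalIntegral.integral_const_mul, intcoscos n m hm]
    rcases eq_or_ne n m with rfl | hnm
    · simp only [if_pos rfl, if_true]
      ring
    · simp [hnm]
  simp only [hz] at h
  exact ((hasSum_ite_eq m (-2 * π * r^m / m)).unique h).symm

lemma L3 (hr0 : 0 < r) (hr1 : r < 1) :
    ∫ x in (-π)..π, (1 - r*Real.cos x) / (1 - 2*r*Real.cos x + r^2) = 2 * π := by
  have h := swap_sum_integral (fun n x => r^n * Real.cos (n * x))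
    (fun x => (1 - r*Real.cos x) / (1 - 2*r*Real.cos x + r^2)) (hasSum_inv hr0 hr1)
    (fun n => by fun_prop) (fun n => 2 * r^n)
    (fun n x => by
      show |r ^ n * Real.cos ((n:ℝ) * x)| ≤ 2 * r ^ n
      rw [abs_mul, abs_of_pos (pow_pos hr0 n)]
      calc r^n * |Real.cos ((n:ℝ)*x)| ≤ r^n * 1 := by
            gcongr
            · exact Real.abs_cos_le_one _
        _ ≤ 2 * r^n := by nlinarith [pow_pos hr0 n])
    (sum_geom hr0 hr1)
  have hz : ∀ n : ℕ, (∫ x in (-π)..π, r^n * Real.cos (n * x))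
      = if n = 0 then 2 * π else 0 := by
    intro n
    rw [intervalIntegral.integral_const_mul]
    rcases Nat.eq_zero_or_pos n with rfl | hn
    · simp [intcos_zero, two_mul]
    · simp [intcos_nat n hn.ne', hn.ne']
  simp only [hz] at h
  exact ((hasSum_ite_eq 0 (2*π)).unique h).symm
end
section
variable {r : ℝ}

lemma logD_bound (hr0 : 0 < r) (hr1 : r < 1) (x : ℝ) :
    |Real.log (1 - 2*r*Real.cos x + r^2)| ≤ 2*(|Real.log (1-r)| + |Real.log (1+r)|) := by
  have hD := Dpos hr0 hr1 x
  have h1 : (1-r)^2 ≤ 1 - 2*r*Real.cos x + r^2 := by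
    nlinarith [Real.cos_le_one x]
  have h2 : 1 - 2*r*Real.cos x + r^2 ≤ (1+r)^2 := by
    nlinarith [Real.neg_one_le_cos x]
  have hl1 : Real.log ((1-r)^2) ≤ Real.log (1 - 2*r*Real.cos x + r^2) :=
    Real.log_le_log (by nlinarith) h1
  have hl2 : Real.log (1 - 2*r*Real.cos x + r^2) ≤ Real.log ((1+r)^2) :=
    Real.log_le_log hD h2
  rw [Real.log_pow] at hl1 hl2
  rw [abs_le]
  constructor
  · have := neg_abs_le (Real.log (1-r))
    push_cast at hl1
    nlinarith [abs_nonneg (Real.log (1+r))]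
  · have := le_abs_self (Real.log (1+r))
    push_cast at hl2
    nlinarith [abs_nonneg (Real.log (1-r))]

lemma contlogD (hr0 : 0 < r) (hr1 : r < 1) :
    Continuous (fun x : ℝ => Real.log (1 - 2*r*Real.cos x + r^2)) :=
  Continuous.log (by fun_prop) (fun x => (Dpos hr0 hr1 x).ne')

set_option maxHeartbeats 800000 in
lemma L4 (hr0 : 0 < r) (hr1 : r < 1) :
    ∫ x in (-π)..π,
        ((1 - r*Real.cos x)/(1 - 2*r*Real.cos x + r^2)) * Real.log (1 - 2*r*Real.cos x + r^2)
      = 2 * π * Real.log (1 - r^2) := by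
  have hr2 : 0 < 1 - r^2 := by nlinarith
  set M := 2*(|Real.log (1-r)| + |Real.log (1+r)|) with hM
  have hMnn : 0 ≤ M := by positivity
  have hF : ∀ x, HasSum
      (fun n : ℕ => (r^n * Real.cos (n * x)) * Real.log (1 - 2*r*Real.cos x + r^2))
      (((1 - r*Real.cos x)/(1 - 2*r*Real.cos x + r^2)) * Real.log (1 - 2*r*Real.cos x + r^2)) :=
    fun x => (hasSum_inv hr0 hr1 x).mul_right _
  have h := swap_sum_integral _ _ hF
    (fun n => Continuous.mul (by fun_prop) (contlogD hr0 hr1))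
    (fun n => r^n * M)
    (fun n x => by
      show |(r^n * Real.cos ((n:ℝ) * x)) * Real.log (1 - 2*r*Real.cos x + r^2)| ≤ r^n * M
      rw [abs_mul, abs_mul, abs_of_pos (pow_pos hr0 n)]
      have hb := logD_bound hr0 hr1 x
      have hc := Real.abs_cos_le_one ((n:ℝ)*x)
      have hp := pow_pos hr0 n
      calc r^n * |Real.cos ((n:ℝ)*x)| * |Real.log (1 - 2*r*Real.cos x + r^2)|
          ≤ r^n * 1 * M := by
            apply mul_le_mul _ hb (abs_nonneg _) (by positivity)
            nlinarith
        _ = r^n * M := by ring)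
    ((summable_geometric_of_lt_one hr0.le hr1).mul_right M)
  have hz : ∀ n : ℕ, (∫ x in (-π)..π,
      (r^n * Real.cos (n * x)) * Real.log (1 - 2*r*Real.cos x + r^2))
      = if n = 0 then 0 else -2 * π * (r^n)^2 / n := by
    intro n
    rcases Nat.eq_zero_or_pos n with rfl | hn
    · simp only [pow_zero, Nat.cast_zero, zero_mul, Real.cos_zero, one_mul, if_true, if_pos rfl]
      exact L1 hr0 hr1
    · have e : (fun x => (r^n * Real.cos (n * x)) * Real.log (1 - 2*r*Real.cos x + r^2))
          = fun x => r^n * (Real.log (1 - 2*r*Real.cos x + r^2) * Real.cos (n * x)) := by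
        funext x; ring
      rw [e, intervalIntegral.integral_const_mul, L2 hr0 hr1 n hn.ne']
      rw [if_neg hn.ne']
      ring
  simp only [hz] at h
  -- identify the sum
  have hlog0 := (hasSum_logD (r := r^2) (by positivity) (by nlinarith) 0).mul_left π
  have hval : π * Real.log (1 - 2*r^2*Real.cos 0 + (r^2)^2) = 2*π*Real.log (1-r^2) := by
    rw [Real.cos_zero]
    have h9 : 1 - 2*r^2*1 + (r^2)^2 = (1-r^2)^2 := by ring
    rw [h9, Real.log_pow]
    push_cast; ring
  rw [hval] at hlog0
  have e : (fun n : ℕ => if n = 0 then (0:ℝ) else -2 * π * (r^n)^2 / n)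
      = fun n : ℕ => π * (-2 * ((r^2)^n * Real.cos (n*0))/n) := by
    funext n
    rcases n with _ | n
    · simp
    · rw [if_neg (Nat.succ_ne_zero n)]
      simp only [mul_zero, Real.cos_zero, mul_one]
      rw [← pow_mul, ← pow_mul, mul_comm 2 (n+1)]
      ring
  rw [← e] at hlog0
  exact (hlog0.unique h).symm

lemma I1 (hr0 : 0 < r) (hr1 : r < 1) :
    ∫ x in (-π)..π, (1 - r^2) / (1 - 2*r*Real.cos x + r^2) = 2 * π := by
  have hcont : Continuous fun x : ℝ => (1 - r*Real.cos x)/(1 - 2*r*Real.cos x + r^2) :=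
    Continuous.div (by fun_prop) (by fun_prop) (fun x => (Dpos hr0 hr1 x).ne')
  have e : ∀ x ∈ Set.uIcc (-π) π, (1 - r^2) / (1 - 2*r*Real.cos x + r^2)
      = 2 * ((1 - r*Real.cos x)/(1 - 2*r*Real.cos x + r^2)) - 1 := by
    intro x _
    have hD := Dpos hr0 hr1 x
    rw [mul_div_assoc', div_sub_one hD.ne']
    congr 1
    ring
  rw [intervalIntegral.integral_congr e, intervalIntegral.integral_sub
    ((hcont.intervalIntegrable _ _).const_mul 2) (intervalIntegrable_const),
    intervalIntegral.integral_const_mul, L3 hr0 hr1]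
  simp
  ring

lemma I2 (hr0 : 0 < r) (hr1 : r < 1) :
    ∫ x in (-π)..π, (1 - r^2) * Real.log (1 - 2*r*Real.cos x + r^2) / (1 - 2*r*Real.cos x + r^2)
      = 4 * π * Real.log (1 - r^2) := by
  have hcont : Continuous fun x : ℝ =>
      ((1 - r*Real.cos x)/(1 - 2*r*Real.cos x + r^2)) * Real.log (1 - 2*r*Real.cos x + r^2) :=
    Continuous.mul
      (Continuous.div (by fun_prop) (by fun_prop) (fun x => (Dpos hr0 hr1 x).ne'))
      (contlogD hr0 hr1)
  have e : ∀ x ∈ Set.uIcc (-π) π,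
      (1 - r^2) * Real.log (1 - 2*r*Real.cos x + r^2) / (1 - 2*r*Real.cos x + r^2)
      = 2 * (((1 - r*Real.cos x)/(1 - 2*r*Real.cos x + r^2)) * Real.log (1 - 2*r*Real.cos x + r^2))
        - Real.log (1 - 2*r*Real.cos x + r^2) := by
    intro x _
    have hD := Dpos hr0 hr1 x
    rw [eq_sub_iff_add_eq, div_mul_eq_mul_div, mul_div_assoc', div_add' _ _ _ hD.ne',
      div_left_inj' hD.ne']
    ring
  rw [intervalIntegral.integral_congr e, intervalIntegral.integral_sub
    ((hcont.intervalIntegrable _ _).const_mul 2) ((contlogD hr0 hr1).intervalIntegrable _ _),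
    intervalIntegral.integral_const_mul, L4 hr0 hr1, L1 hr0 hr1]
  ring

/-- for the wrapped Cauchy density
`p_κ(φ) = (1/2π) sinh(√κ)/(cosh(√κ) − cos φ)` on `[-π, π]`, one has
`∫ p_κ log₂(2π p_κ) dφ = −log₂(1 − e^{-2√κ})`; equivalently the differential entropy is
`h(p_κ) = log₂(2π(1 − e^{-2√κ}))`. -/
theorem wrapped_cauchy_relative_entropy
    (κ : ℝ) (hκ : 0 < κ) (p : ℝ → ℝ)
    (hp : ∀ φ : ℝ, p φ =
      (1 / (2 * π)) * Real.sinh (Real.sqrt κ) / (Real.cosh (Real.sqrt κ) - Real.cos φ)) :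
    (∫ φ in (-π)..π, p φ * Real.logb 2 (2 * π * p φ)) =
      -Real.logb 2 (1 - Real.exp (-2 * Real.sqrt κ)) ∧
    (-∫ φ in (-π)..π, p φ * Real.logb 2 (p φ)) =
      Real.logb 2 (2 * π * (1 - Real.exp (-2 * Real.sqrt κ))) := by
  have hπ : 0 < π := Real.pi_pos
  set s := Real.sqrt κ with hs
  have hs0 : 0 < s := Real.sqrt_pos.mpr hκ
  set r := Real.exp (-s) with hrdef
  have hr0 : 0 < r := Real.exp_pos _
  have hr1 : r < 1 := by rw [hrdef]; exact Real.exp_lt_one_iff.mpr (by linarith)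
  have hr2 : 0 < 1 - r^2 := by nlinarith
  have hDpos : ∀ φ : ℝ, 0 < 1 - 2*r*Real.cos φ + r^2 := Dpos hr0 hr1
  have hexp : Real.exp s = r⁻¹ := by rw [hrdef, ← Real.exp_neg, neg_neg]
  have hr2e : Real.exp (-2*s) = r^2 := by
    rw [hrdef, sq, ← Real.exp_add]
    ring_nf
  have hlog2 : Real.log 2 ≠ 0 := (Real.log_pos one_lt_two).ne'
  have hpφ : ∀ φ : ℝ, p φ = (2*π)⁻¹ * ((1 - r^2)/(1 - 2*r*Real.cos φ + r^2)) := by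
    intro φ
    have hD := hDpos φ
    have hcc : Real.cosh s - Real.cos φ = (1 - 2*r*Real.cos φ + r^2) / (2*r) := by
      rw [Real.cosh_eq, hexp, ← hrdef]
      field_simp
      ring
    have hss : Real.sinh s = (1 - r^2) / (2*r) := by
      rw [Real.sinh_eq, hexp, ← hrdef]
      field_simp
    rw [hp φ, hcc, hss]
    rw [div_div_eq_mul_div]
    field_simp
  have h2πp : ∀ φ : ℝ, 2*π*p φ = (1 - r^2)/(1 - 2*r*Real.cos φ + r^2) := by
    intro φ
    rw [hpφ φ]
    field_simp
  have hppos : ∀ φ : ℝ, 0 < p φ := by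
    intro φ; rw [hpφ φ]
    have := hDpos φ
    positivity
  have e1 : ∀ φ : ℝ, p φ * Real.logb 2 (2*π*p φ)
      = (Real.log 2)⁻¹ * ((Real.log (1-r^2) * (2*π)⁻¹) * ((1-r^2)/(1 - 2*r*Real.cos φ + r^2))
          - (2*π)⁻¹ * ((1-r^2) * Real.log (1 - 2*r*Real.cos φ + r^2)/(1 - 2*r*Real.cos φ + r^2))) := by
    intro φ
    have hD := hDpos φ
    rw [h2πp φ, hpφ φ]
    simp only [Real.logb, Real.log_div hr2.ne' hD.ne']
    field_simp
  have c1 : Continuous fun φ : ℝ => (1-r^2)/(1 - 2*r*Real.cos φ + r^2) :=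
    Continuous.div (by fun_prop) (by fun_prop) (fun x => (hDpos x).ne')
  have c2 : Continuous fun φ : ℝ =>
      (1-r^2) * Real.log (1 - 2*r*Real.cos φ + r^2)/(1 - 2*r*Real.cos φ + r^2) :=
    Continuous.div (continuous_const.mul (contlogD hr0 hr1)) (by fun_prop)
      (fun x => (hDpos x).ne')
  have key1 : (∫ φ in (-π)..π, p φ * Real.logb 2 (2*π*p φ)) = -Real.logb 2 (1 - r^2) := by
    rw [intervalIntegral.integral_congr (fun φ _ => e1 φ),
      intervalIntegral.integral_const_mul,
      intervalIntegral.integral_sub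
        ((c1.intervalIntegrable _ _).const_mul _)
        ((c2.intervalIntegrable _ _).const_mul _),
      intervalIntegral.integral_const_mul, intervalIntegral.integral_const_mul,
      I1 hr0 hr1, I2 hr0 hr1]
    simp only [Real.logb]
    field_simp
    ring
  have hint_p : ∫ φ in (-π)..π, p φ = 1 := by
    rw [intervalIntegral.integral_congr (fun φ _ => hpφ φ),
      intervalIntegral.integral_const_mul, I1 hr0 hr1]
    field_simp
  refine ⟨?_, ?_⟩
  · rw [key1, hr2e]
  · have e2 : ∀ φ : ℝ, p φ * Real.logb 2 (p φ)
        = p φ * Real.logb 2 (2*π*p φ) - Real.logb 2 (2*π) * p φ := by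
      intro φ
      have hlb : Real.logb 2 (2*π*p φ) = Real.logb 2 (2*π) + Real.logb 2 (p φ) :=
        Real.logb_mul (by positivity) (hppos φ).ne'
      rw [hlb]; ring
    have ci1 : IntervalIntegrable (fun φ => p φ * Real.logb 2 (2*π*p φ)) volume (-π) π := by
      rw [show (fun φ => p φ * Real.logb 2 (2*π*p φ)) = _ from funext e1]
      exact (continuous_const.mul
        ((continuous_const.mul c1).sub (continuous_const.mul c2))).intervalIntegrable _ _
    have ci2 : IntervalIntegrable p volume (-π) π := by
      rw [show p = _ from funext hpφ]
      exact (continuous_const.mul c1).intervalIntegrable _ _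
    rw [intervalIntegral.integral_congr (fun φ _ => e2 φ),
      intervalIntegral.integral_sub ci1 (ci2.const_mul _),
      key1, intervalIntegral.integral_const_mul, hint_p, hr2e,
      Real.logb_mul (by positivity : (2*π:ℝ) ≠ 0) hr2.ne']
    ring
end
end

section
/- As q → 0⁺, ln φ_E(q) + 2 Σ_{k=1}^{∞} (−1)^{k−1} q^{(k²+k)/2} / ( k (1 − q^k) ) = 2q − ln(1 + q) + O(q⁶), where φ_E(q) = ∏_{k=1}^{∞}(1 − q^k) is the Euler function. Equivalently, the function q ↦ ln φ_E(q) + 2 Σ_{k≥1} (−1)^{k−1} q^{(k²+k)/2}/(k(1−q^k)) − 2q + ln(1+q) is O(q⁶) as q → 0⁺. -/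
open scoped Real

set_option maxHeartbeats 1000000

open Real Finset

section EulerAux

variable {q : ℝ}

variable {q : ℝ} (hq0 : 0 < q) (hq : q < 1/2)

lemma aux_q1 (hq0 : 0 < q) (hq : q < 1/2) (n : ℕ) : q ^ (n+1) ≤ 1/2 :=
  le_trans (pow_le_pow_of_le_one hq0.le (by linarith) (Nat.one_le_iff_ne_zero.2 (by omega))
    |>.trans_eq (pow_one q)) hq.le

lemma aux_q2 (hq0 : 0 < q) (hq : q < 1/2) (n : ℕ) : (1:ℝ)/2 ≤ 1 - q ^ (n+1) := by
  have := aux_q1 hq0 hq n; linarith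

lemma aux_q3 (hq0 : 0 < q) (hq : q < 1/2) (n : ℕ) : |q ^ (n+1)| < 1 := by
  rw [abs_of_pos (pow_pos hq0 _)]
  have := aux_q1 hq0 hq n; linarith

-- summability of the double family
lemma summable_F (hq0 : 0 < q) (hq : q < 1/2) :
    Summable (fun p : ℕ × ℕ => q ^ ((p.1+1)*(p.2+1)) / (p.2+1)) := by
  have hg : Summable (fun p : ℕ × ℕ => q ^ (p.1+1) * q ^ p.2) :=
    Summable.mul_of_nonneg (f := fun k : ℕ => q ^ (k+1)) (g := fun n : ℕ => q ^ n)
      ((summable_nat_add_iff 1).2 (summable_geometric_of_lt_one hq0.le (by linarith)))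
      (summable_geometric_of_lt_one hq0.le (by linarith))
      (fun k => by positivity) (fun n => by positivity)
  refine hg.of_nonneg_of_le (fun p => by positivity) (fun p => ?_)
  rw [← pow_add]
  have h1 : q ^ ((p.1+1)*(p.2+1)) ≤ q ^ (p.1+1+p.2) :=
    pow_le_pow_of_le_one hq0.le (by linarith) (by nlinarith [p.1.zero_le, p.2.zero_le])
  have h2 : q ^ ((p.1+1)*(p.2+1)) / ((p.2:ℝ)+1) ≤ q ^ ((p.1+1)*(p.2+1)) := by
    apply div_le_self (by positivity); linarith [p.2.cast_nonneg (α := ℝ)]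
  exact h2.trans h1




-- per-k inner hasSum
lemma inner_hasSum (hq0 : 0 < q) (hq : q < 1/2) (k : ℕ) :
    HasSum (fun n : ℕ => q ^ ((k+1)*(n+1)) / (n+1)) (-Real.log (1 - q^(k+1))) := by
  have h : |q ^ (k+1)| < 1 := by
    rw [abs_of_pos (pow_pos hq0 _)]
    have : q ^ (k+1) ≤ q ^ 1 := pow_le_pow_of_le_one hq0.le (by linarith) (by omega)
    simpa using this.trans_lt (by linarith)
  have := hasSum_pow_div_log_of_abs_lt_one h
  refine this.congr_fun fun n => ?_
  rw [← pow_mul, mul_comm]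

-- geometric inner sum over k for fixed n
lemma inner_hasSum_k (hq0 : 0 < q) (hq : q < 1/2) (n : ℕ) :
    HasSum (fun k : ℕ => q ^ ((k+1)*(n+1)) / (n+1))
      (q ^ (n+1) / ((n+1) * (1 - q ^ (n+1)))) := by
  have hr0 : (0:ℝ) ≤ q ^ (n+1) := by positivity
  have hr1 : q ^ (n+1) < 1 := by
    have : q ^ (n+1) ≤ q ^ 1 := pow_le_pow_of_le_one hq0.le (by linarith) (by omega)
    simp at this; linarith
  have h2 := ((hasSum_geometric_of_lt_one hr0 hr1).mul_left (q ^ (n+1))).div_const ((n:ℝ)+1)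
  convert h2 using 1
  · rfl
  · funext k
    rw [← pow_succ', ← pow_mul]
    ring_nf
  · have hne1 : ((n:ℝ)+1) ≠ 0 := by positivity
    have hne2 : (1:ℝ) - q^(n+1) ≠ 0 := by linarith
    field_simp
lemma hslog (hq0 : 0 < q) (hq : q < 1/2) :
    Summable (fun k : ℕ => Real.log (1 - q^(k+1))) := by
  apply Summable.of_norm_bounded (g := fun k => 2 * q^(k+1))
  · exact ((summable_nat_add_iff 1).2
      (summable_geometric_of_lt_one hq0.le (by linarith))).mul_left 2
  · intro k
    have h := Real.abs_log_sub_add_sum_range_le (aux_q3 hq0 hq k) 0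
    simp only [Finset.range_zero, Finset.sum_empty, zero_add, pow_one] at h
    rw [Real.norm_eq_abs]
    have h1 : |q ^ (k+1)| = q ^ (k+1) := abs_of_pos (pow_pos hq0 _)
    have h2 := aux_q1 hq0 hq k
    have h3 : (0:ℝ) < q ^ (k+1) := pow_pos hq0 _
    rw [h1] at h
    calc |Real.log (1 - q^(k+1))| ≤ q^(k+1) / (1 - q^(k+1)) := h
      _ ≤ q^(k+1) / (1/2) := by
          apply div_le_div_of_nonneg_left h3.le (by norm_num) (by linarith)
      _ = 2 * q^(k+1) := by ring

lemma log_tprod_eq {q : ℝ} (hq0 : 0 < q) (hq : q < 1/2) :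
    Real.log (∏' k : ℕ, (1 - q ^ (k + 1))) =
      -∑' n : ℕ, q ^ (n+1) / (((n:ℝ)+1) * (1 - q ^ (n+1))) := by
  have hpos : ∀ k : ℕ, (0:ℝ) < 1 - q^(k+1) := fun k => by
    have := aux_q2 hq0 hq k; linarith
  have hprod : ∏' k : ℕ, (1 - q^(k+1)) = Real.exp (∑' k : ℕ, Real.log (1 - q^(k+1))) := by
    have h := Real.rexp_tsum_eq_tprod (ι := ℕ) (f := fun k => 1 - q^(k+1))
      (fun k => hpos k) (hslog hq0 hq)
    exact h.symm
  rw [hprod, Real.log_exp]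
  have h1 : ∀ k : ℕ, Real.log (1 - q^(k+1)) = -∑' n : ℕ, q^((k+1)*(n+1))/((n:ℝ)+1) :=
    fun k => by rw [(inner_hasSum hq0 hq k).tsum_eq]; ring
  calc ∑' k : ℕ, Real.log (1 - q^(k+1))
      = -∑' k : ℕ, ∑' n : ℕ, q^((k+1)*(n+1))/((n:ℝ)+1) := by
        rw [← tsum_neg]
        exact tsum_congr fun k => by rw [h1 k]
    _ = -∑' n : ℕ, ∑' k : ℕ, q^((k+1)*(n+1))/((n:ℝ)+1) := by
        congr 1
        have hunc : Summable (Function.uncurry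
            (fun k n : ℕ => q^((k+1)*(n+1))/((n:ℝ)+1))) := by
          have := summable_F hq0 hq
          exact this.congr fun p => rfl
        exact (Summable.tsum_comm' (f := fun k n : ℕ => q^((k+1)*(n+1))/((n:ℝ)+1)) hunc
          (fun k => (inner_hasSum hq0 hq k).summable)
          (fun n => (inner_hasSum_k hq0 hq n).summable)).symm
    _ = -∑' n : ℕ, q^(n+1)/(((n:ℝ)+1)*(1-q^(n+1))) := by
        congr 1
        exact tsum_congr fun n => (inner_hasSum_k hq0 hq n).tsum_eq

lemma tail_bound (hq0 : 0 < q) (hq : q < 1/2) {f : ℕ → ℝ} {c : ℝ} (hc : 0 ≤ c)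
    (hf : ∀ k, |f k| ≤ c * q^k) : |∑' k, f k| ≤ 2 * c := by
  have hgs : Summable (fun k : ℕ => c * q^k) :=
    (summable_geometric_of_lt_one hq0.le (by linarith)).mul_left c
  have hfs : Summable (fun k => ‖f k‖) :=
    hgs.of_nonneg_of_le (fun k => norm_nonneg _) (fun k => hf k)
  calc |∑' k, f k| ≤ ∑' k, ‖f k‖ := norm_tsum_le_tsum_norm hfs
    _ ≤ ∑' k : ℕ, c * q^k := Summable.tsum_le_tsum (fun k => hf k) hfs hgs
    _ = c * (1-q)⁻¹ := by rw [tsum_mul_left, tsum_geometric_of_lt_one hq0.le (by linarith)]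
    _ ≤ c * 2 := by
        apply mul_le_mul_of_nonneg_left ?_ hc
        rw [inv_le_comm₀ (by linarith) (by norm_num)]
        linarith
    _ = 2 * c := by ring

-- Lambert term bound
lemma aterm_bound (hq0 : 0 < q) (hq : q < 1/2) (n : ℕ) :
    |q^(n+1) / (((n:ℝ)+1) * (1-q^(n+1)))| ≤ 2 * q^(n+1) := by
  have hq2 := aux_q2 hq0 hq n
  have h1 : (1:ℝ) ≤ (n:ℝ)+1 := by have := n.cast_nonneg (α := ℝ); linarith
  have hden : (1:ℝ)/2 ≤ ((n:ℝ)+1) * (1-q^(n+1)) := by nlinarith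
  rw [abs_div, abs_of_pos (pow_pos hq0 _),
    abs_of_pos (by linarith : (0:ℝ) < ((n:ℝ)+1) * (1-q^(n+1)))]
  calc q^(n+1) / (((n:ℝ)+1) * (1-q^(n+1))) ≤ q^(n+1) / (1/2) :=
        div_le_div₀ (by positivity) le_rfl (by norm_num) hden
    _ = 2 * q^(n+1) := by ring

-- general triangular term bound
lemma bterm_bound' (hq0 : 0 < q) (hq : q < 1/2) (k j : ℕ) (hj : j ≤ ((k+1)^2+(k+1))/2) :
    |(-1:ℝ)^k * q ^ (((k+1)^2+(k+1))/2) / (((k:ℝ)+1) * (1-q^(k+1)))| ≤ 2 * q^j := by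
  have hq2 := aux_q2 hq0 hq k
  have hqe : q ^ (((k+1)^2+(k+1))/2) ≤ q ^ j :=
    pow_le_pow_of_le_one hq0.le (by linarith) hj
  have h1 : (1:ℝ) ≤ (k:ℝ)+1 := by have := k.cast_nonneg (α := ℝ); linarith
  have hden : (1:ℝ)/2 ≤ ((k:ℝ)+1) * (1-q^(k+1)) := by nlinarith
  rw [abs_div, abs_mul, abs_pow, abs_neg, abs_one, one_pow, one_mul,
    abs_of_pos (pow_pos hq0 _),
    abs_of_pos (by linarith : (0:ℝ) < ((k:ℝ)+1) * (1-q^(k+1)))]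
  calc q ^ (((k+1)^2+(k+1))/2) / (((k:ℝ)+1) * (1-q^(k+1)))
      ≤ q ^ j / (1/2) := div_le_div₀ (by positivity) hqe (by norm_num) hden
    _ = 2 * q^j := by ring

-- log(1+q) estimate
lemma bterm_summable (hq0 : 0 < q) (hq : q < 1/2) :
    Summable (fun k : ℕ => (-1:ℝ)^k * q ^ (((k+1)^2+(k+1))/2) / (((k:ℝ)+1) * (1-q^(k+1)))) := by
  apply Summable.of_norm_bounded (g := fun k => 2 * q^(k+1))
  · exact ((summable_nat_add_iff 1).2
      (summable_geometric_of_lt_one hq0.le (by linarith))).mul_left 2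
  · exact fun k => bterm_bound' hq0 hq k (k+1) (by
      have h : (k+1)^2 = k*k+2*k+1 := by ring
      omega)

lemma log_est (hq0 : 0 < q) (hq : q < 1/2) :
    |Real.log (1+q) - (q - q^2/2 + q^3/3 - q^4/4 + q^5/5)| ≤ 2*q^6 := by
  have habs : |(-q)| < 1 := by rw [abs_neg, abs_of_pos hq0]; linarith
  have h := Real.abs_log_sub_add_sum_range_le habs 5
  have he : (∑ i ∈ Finset.range 5, (-q)^(i+1)/((i:ℝ)+1)) + Real.log (1 - -q)
      = Real.log (1+q) - (q - q^2/2 + q^3/3 - q^4/4 + q^5/5) := by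
    rw [Finset.sum_range_succ, Finset.sum_range_succ, Finset.sum_range_succ,
      Finset.sum_range_succ, Finset.sum_range_succ, Finset.sum_range_zero,
      show (1:ℝ) - -q = 1 + q by ring]
    push_cast
    ring
  rw [he] at h
  refine h.trans ?_
  rw [abs_neg, abs_of_pos hq0]
  have : (1:ℝ)/2 ≤ 1 - q := by linarith
  calc q^6 / (1-q) ≤ q^6 / (1/2) := div_le_div₀ (by positivity) le_rfl (by norm_num) this
    _ = 2 * q^6 := by ring

lemma P_bound (hq0 : 0 < q) (hq : q < 1/2) :
    |(-(q/(1-q) + q^2/(2*(1-q^2)) + q^3/(3*(1-q^3)) + q^4/(4*(1-q^4)) + q^5/(5*(1-q^5)))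
      + 2*(q/(1-q) - q^3/(2*(1-q^2))) - 2*q
      + (q - q^2/2 + q^3/3 - q^4/4 + q^5/5))| ≤ 87 * q^6 := by
  have h1 : (1:ℝ)/2 ≤ 1 - q := by have := aux_q2 hq0 hq 0; rw [pow_one] at this; exact this
  have h2 : (1:ℝ)/2 ≤ 1 - q^2 := aux_q2 hq0 hq 1
  have h3 : (1:ℝ)/2 ≤ 1 - q^3 := aux_q2 hq0 hq 2
  have h4 : (1:ℝ)/2 ≤ 1 - q^4 := aux_q2 hq0 hq 3
  have h5 : (1:ℝ)/2 ≤ 1 - q^5 := aux_q2 hq0 hq 4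
  have e1 : (1:ℝ) - q ≠ 0 := by nlinarith
  have e2 : (1:ℝ) - q^2 ≠ 0 := by nlinarith
  have e3 : (1:ℝ) - q^3 ≠ 0 := by nlinarith
  have e4 : (1:ℝ) - q^4 ≠ 0 := by nlinarith
  have e5 : (1:ℝ) - q^5 ≠ 0 := by nlinarith
  set n2 : ℝ := (10 - 10*q + 5*q^2 - 35*q^3 + 23*q^4 + 12*q^5 - 13*q^6 + 30*q^7 + 20*q^8
    - 59*q^9 - 10*q^10 + 35*q^11 - 23*q^12 + 27*q^13 - 12*q^14)/60 with hn2
  set d : ℝ := (1-q)*(1-q^2)*(1-q^3)*(1-q^4)*(1-q^5) with hd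
  have hP : (-(q/(1-q) + q^2/(2*(1-q^2)) + q^3/(3*(1-q^3)) + q^4/(4*(1-q^4)) + q^5/(5*(1-q^5)))
      + 2*(q/(1-q) - q^3/(2*(1-q^2))) - 2*q
      + (q - q^2/2 + q^3/3 - q^4/4 + q^5/5)) = q^6 * n2 / d := by
    rw [hn2, hd]
    field_simp
    ring
  have hq6 : (0:ℝ) < q^6 := by positivity
  -- power bounds
  have hpow : ∀ i : ℕ, 0 ≤ q^i ∧ q^i ≤ 1 :=
    fun i => ⟨by positivity, pow_le_one₀ hq0.le (by linarith)⟩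
  have hn2b : |n2| ≤ 27/10 := by
    rw [hn2, abs_le]
    obtain ⟨p1a, p1b⟩ := hpow 1; obtain ⟨p2a, p2b⟩ := hpow 2
    obtain ⟨p3a, p3b⟩ := hpow 3; obtain ⟨p4a, p4b⟩ := hpow 4
    obtain ⟨p5a, p5b⟩ := hpow 5; obtain ⟨p6a, p6b⟩ := hpow 6
    obtain ⟨p7a, p7b⟩ := hpow 7; obtain ⟨p8a, p8b⟩ := hpow 8
    obtain ⟨p9a, p9b⟩ := hpow 9; obtain ⟨p10a, p10b⟩ := hpow 10
    obtain ⟨p11a, p11b⟩ := hpow 11; obtain ⟨p12a, p12b⟩ := hpow 12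
    obtain ⟨p13a, p13b⟩ := hpow 13; obtain ⟨p14a, p14b⟩ := hpow 14
    constructor
    · simp only [pow_one] at p1a p1b
      linarith
    · simp only [pow_one] at p1a p1b
      linarith
  have hd_lb : (1:ℝ)/32 ≤ d := by
    have q2 : (1:ℝ)/2 ≤ 1 - q := h1
    have p2 : (1:ℝ)/4 ≤ (1-q)*(1-q^2) := by
      calc (1:ℝ)/4 = (1/2)*(1/2) := by norm_num
        _ ≤ (1-q)*(1-q^2) := mul_le_mul h1 h2 (by norm_num) (by linarith)
    have p3 : (1:ℝ)/8 ≤ (1-q)*(1-q^2)*(1-q^3) := by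
      calc (1:ℝ)/8 = (1/4)*(1/2) := by norm_num
        _ ≤ (1-q)*(1-q^2)*(1-q^3) := mul_le_mul p2 h3 (by norm_num) (by nlinarith)
    have p4 : (1:ℝ)/16 ≤ (1-q)*(1-q^2)*(1-q^3)*(1-q^4) := by
      calc (1:ℝ)/16 = (1/8)*(1/2) := by norm_num
        _ ≤ _ := mul_le_mul p3 h4 (by norm_num) (by nlinarith)
    calc (1:ℝ)/32 = (1/16)*(1/2) := by norm_num
      _ ≤ _ := mul_le_mul p4 h5 (by norm_num) (by nlinarith)
  have hd_pos : (0:ℝ) < d := by linarith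
  rw [hP, abs_div, abs_mul, abs_of_pos hq6, abs_of_pos hd_pos]
  calc q^6 * |n2| / d ≤ q^6 * (27/10) / (1/32) :=
        div_le_div₀ (by positivity) (by nlinarith) (by norm_num) hd_lb
    _ ≤ 87 * q^6 := by nlinarith


end EulerAux

/-- as `q → 0⁺`,
`ln φ_E(q) + 2 Σ_{k≥1} (−1)^{k−1} q^{(k²+k)/2}/(k(1−q^k)) − 2q + ln(1+q) = O(q⁶)`,
where `φ_E(q) = ∏_{k≥1}(1 − q^k)` is the Euler function. -/
theorem euler_function_series_small_q_expansion :
    ∃ C δ : ℝ, 0 < C ∧ 0 < δ ∧ ∀ q : ℝ, 0 < q → q < δ →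
      |Real.log (∏' k : ℕ, (1 - q ^ (k + 1))) +
          2 * ∑' k : ℕ,
            (-1 : ℝ) ^ k * q ^ (((k + 1) ^ 2 + (k + 1)) / 2) /
              (((k : ℝ) + 1) * (1 - q ^ (k + 1))) -
          2 * q + Real.log (1 + q)| ≤ C * q ^ 6 := by
  refine ⟨200, 1/2, by norm_num, by norm_num, fun q hq0 hq => ?_⟩
  have hq6 : (0:ℝ) ≤ q^6 := by positivity
  have hlog := log_tprod_eq hq0 hq
  have hasum : Summable (fun n : ℕ => q ^ (n+1) / (((n:ℝ)+1) * (1 - q ^ (n+1)))) := by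
    apply Summable.of_norm_bounded (g := fun n => 2 * q^(n+1))
    · exact ((summable_nat_add_iff 1).2
        (summable_geometric_of_lt_one hq0.le (by linarith))).mul_left 2
    · exact fun n => aterm_bound hq0 hq n
  have hbsum := bterm_summable hq0 hq
  have hsplitA := Summable.sum_add_tsum_nat_add (f := fun n : ℕ =>
    q ^ (n+1) / (((n:ℝ)+1) * (1 - q ^ (n+1)))) 5 hasum
  have hsplitB := Summable.sum_add_tsum_nat_add (f := fun k : ℕ =>
    (-1 : ℝ) ^ k * q ^ (((k + 1) ^ 2 + (k + 1)) / 2) /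
      (((k : ℝ) + 1) * (1 - q ^ (k + 1)))) 2 hbsum
  -- heads
  have hS5 : (∑ i ∈ Finset.range 5, q ^ (i+1) / (((i:ℝ)+1) * (1 - q ^ (i+1))))
      = q/(1-q) + q^2/(2*(1-q^2)) + q^3/(3*(1-q^3)) + q^4/(4*(1-q^4)) + q^5/(5*(1-q^5)) := by
    rw [Finset.sum_range_succ, Finset.sum_range_succ, Finset.sum_range_succ,
      Finset.sum_range_succ, Finset.sum_range_succ, Finset.sum_range_zero]
    norm_num
  have hB2 : (∑ i ∈ Finset.range 2, (-1 : ℝ) ^ i * q ^ (((i + 1) ^ 2 + (i + 1)) / 2) /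
        (((i : ℝ) + 1) * (1 - q ^ (i + 1))))
      = q/(1-q) - q^3/(2*(1-q^2)) := by
    rw [Finset.sum_range_succ, Finset.sum_range_succ, Finset.sum_range_zero]
    norm_num
    ring
  -- tail bounds
  have hT1 : |∑' i : ℕ, q ^ (i+5+1) / ((((i+5:ℕ):ℝ)+1) * (1 - q ^ (i+5+1)))| ≤ 2*(2*q^6) := by
    refine tail_bound hq0 hq (by positivity) (fun i => ?_)
    calc |q ^ (i+5+1) / ((((i+5:ℕ):ℝ)+1) * (1 - q ^ (i+5+1)))| ≤ 2 * q^(i+5+1) :=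
          aterm_bound hq0 hq (i+5)
      _ = 2*q^6 * q^i := by rw [show i+5+1 = 6+i by omega, pow_add]; ring
  have hT2 : |∑' i : ℕ, (-1 : ℝ) ^ (i+2) * q ^ ((((i+2) + 1) ^ 2 + ((i+2) + 1)) / 2) /
        ((((i+2:ℕ):ℝ) + 1) * (1 - q ^ ((i+2) + 1)))| ≤ 2*(2*q^6) := by
    refine tail_bound hq0 hq (by positivity) (fun i => ?_)
    have hj : i+6 ≤ (((i+2)+1)^2+((i+2)+1))/2 := by
      have h : ((i+2)+1)^2 = i*i+6*i+9 := by ring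
      omega
    calc |(-1 : ℝ) ^ (i+2) * q ^ ((((i+2) + 1) ^ 2 + ((i+2) + 1)) / 2) /
          ((((i+2:ℕ):ℝ) + 1) * (1 - q ^ ((i+2) + 1)))| ≤ 2 * q^(i+6) :=
          bterm_bound' hq0 hq (i+2) (i+6) hj
      _ = 2*q^6 * q^i := by rw [show i+6 = 6+i by omega, pow_add]; ring
  have hT3 : |Real.log (1+q) - (q - q^2/2 + q^3/3 - q^4/4 + q^5/5)| ≤ 2*q^6 :=
    log_est hq0 hq
  have hP := P_bound hq0 hq
  -- assemble
  rw [hlog, ← hsplitA, ← hsplitB, hS5, hB2]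
  have key : -((q/(1-q) + q^2/(2*(1-q^2)) + q^3/(3*(1-q^3)) + q^4/(4*(1-q^4))
        + q^5/(5*(1-q^5)))
        + ∑' i : ℕ, q ^ (i+5+1) / ((((i+5:ℕ):ℝ)+1) * (1 - q ^ (i+5+1))))
      + 2 * ((q/(1-q) - q^3/(2*(1-q^2)))
        + ∑' i : ℕ, (-1 : ℝ) ^ (i+2) * q ^ ((((i+2) + 1) ^ 2 + ((i+2) + 1)) / 2) /
          ((((i+2:ℕ):ℝ) + 1) * (1 - q ^ ((i+2) + 1))))
      - 2*q + Real.log (1 + q)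
      = (-(q/(1-q) + q^2/(2*(1-q^2)) + q^3/(3*(1-q^3)) + q^4/(4*(1-q^4)) + q^5/(5*(1-q^5)))
          + 2*(q/(1-q) - q^3/(2*(1-q^2))) - 2*q
          + (q - q^2/2 + q^3/3 - q^4/4 + q^5/5))
        + (-(∑' i : ℕ, q ^ (i+5+1) / ((((i+5:ℕ):ℝ)+1) * (1 - q ^ (i+5+1))))
          + (2 * (∑' i : ℕ, (-1 : ℝ) ^ (i+2) * q ^ ((((i+2) + 1) ^ 2 + ((i+2) + 1)) / 2) /
              ((((i+2:ℕ):ℝ) + 1) * (1 - q ^ ((i+2) + 1))))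
            + (Real.log (1+q) - (q - q^2/2 + q^3/3 - q^4/4 + q^5/5)))) := by
    ring
  rw [key]
  have step1 := abs_add_le
    (-(q/(1-q) + q^2/(2*(1-q^2)) + q^3/(3*(1-q^3)) + q^4/(4*(1-q^4)) + q^5/(5*(1-q^5)))
      + 2*(q/(1-q) - q^3/(2*(1-q^2))) - 2*q
      + (q - q^2/2 + q^3/3 - q^4/4 + q^5/5))
    (-(∑' i : ℕ, q ^ (i+5+1) / ((((i+5:ℕ):ℝ)+1) * (1 - q ^ (i+5+1))))
      + (2 * (∑' i : ℕ, (-1 : ℝ) ^ (i+2) * q ^ ((((i+2) + 1) ^ 2 + ((i+2) + 1)) / 2) /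
          ((((i+2:ℕ):ℝ) + 1) * (1 - q ^ ((i+2) + 1))))
        + (Real.log (1+q) - (q - q^2/2 + q^3/3 - q^4/4 + q^5/5))))
  have step2 := abs_add_le
    (-(∑' i : ℕ, q ^ (i+5+1) / ((((i+5:ℕ):ℝ)+1) * (1 - q ^ (i+5+1)))))
    (2 * (∑' i : ℕ, (-1 : ℝ) ^ (i+2) * q ^ ((((i+2) + 1) ^ 2 + ((i+2) + 1)) / 2) /
          ((((i+2:ℕ):ℝ) + 1) * (1 - q ^ ((i+2) + 1))))
      + (Real.log (1+q) - (q - q^2/2 + q^3/3 - q^4/4 + q^5/5)))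
  have step3 := abs_add_le
    (2 * (∑' i : ℕ, (-1 : ℝ) ^ (i+2) * q ^ ((((i+2) + 1) ^ 2 + ((i+2) + 1)) / 2) /
          ((((i+2:ℕ):ℝ) + 1) * (1 - q ^ ((i+2) + 1)))))
    (Real.log (1+q) - (q - q^2/2 + q^3/3 - q^4/4 + q^5/5))
  rw [abs_neg] at step2
  rw [abs_mul, show |(2:ℝ)| = 2 by norm_num] at step3
  linarith
end
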